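/- arXiv:2601.06534 — 3 statements merged into one kernel-verified Lean document; each statement's English description precedes it below -/
import Mathlib

section
/- In the admissibility setting with (p,q) ≠ (∞,1), for x ∈ F^u_τ and t ≥ τ one has ‖x‖_τ ≤ 2Ke^c‖G‖²·(t−τ)^{−(1−1/q+1/p)}·‖T(t,τ)x‖_t. Consequently there exists T > 0 such that ‖T(t,τ)x‖_t ≥ 2‖x‖_τ whenever t − τ ≥ T. -/
open MeasureTheory Set Filter
open scoped ENNReal

/-- The `L^p`-norm of a function `f : ℝ → X` with respect to a family of norms
`N t = ‖·‖_t` on `X` (ess sup when `p = ∞`). -/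
noncomputable def famLpNorm {X : Type*} [NormedAddCommGroup X]
    (N : ℝ → X → ℝ) (p : ℝ≥0∞) (f : ℝ → X) : ℝ≥0∞ :=
  if p = ∞ then essSup (fun t => ENNReal.ofReal (N t (f t))) volume
  else (∫⁻ t, ENNReal.ofReal (N t (f t)) ^ p.toReal) ^ (1 / p.toReal)

/-- Membership in `Y₁ = L^p ∩ C_b` with respect to the family of norms `N`. -/
def MemY1 {X : Type*} [NormedAddCommGroup X]
    (N : ℝ → X → ℝ) (p : ℝ≥0∞) (x : ℝ → X) : Prop :=
  Continuous x ∧ (∃ M, ∀ t, N t (x t) ≤ M) ∧ famLpNorm N p x < ∞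

/-- Membership in `Y₂ = L^q` with respect to the family of norms `N`. -/
def MemY2 {X : Type*} [NormedAddCommGroup X]
    (N : ℝ → X → ℝ) (q : ℝ≥0∞) (y : ℝ → X) : Prop :=
  AEStronglyMeasurable y volume ∧ famLpNorm N q y < ∞

/-- `x` solves the inhomogeneous integral equation
`x t = T t τ (x τ) + ∫_τ^t T t s (y s) ds` associated with the evolutionary family `T`. -/
def SolvesEq {X : Type*} [NormedAddCommGroup X] [NormedSpace ℝ X]
    (T : ℝ → ℝ → X →L[ℝ] X) (x y : ℝ → X) : Prop :=
  ∀ τ t, τ ≤ t → x t = T t τ (x τ) + ∫ s in Ioc τ t, T t s (y s)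

/-- The stable set `F^s_τ`: points with forward trajectory bounded in the norms `‖·‖_t`
whose zero-extension lies in `L^p`. -/
def Fs {X : Type*} [NormedAddCommGroup X] [NormedSpace ℝ X]
    (T : ℝ → ℝ → X →L[ℝ] X) (N : ℝ → X → ℝ) (p : ℝ≥0∞) (τ : ℝ) : Set X :=
  {x | (∃ M, ∀ t, τ ≤ t → N t (T t τ x) ≤ M) ∧
    famLpNorm N p (fun t => if τ ≤ t then T t τ x else 0) < ∞}

/-- The unstable set `F^u_τ`: points admitting a backward trajectory bounded in the norms
`‖·‖_t` whose zero-extension lies in `L^p`. -/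
def Fu {X : Type*} [NormedAddCommGroup X] [NormedSpace ℝ X]
    (T : ℝ → ℝ → X →L[ℝ] X) (N : ℝ → X → ℝ) (p : ℝ≥0∞) (τ : ℝ) : Set X :=
  {x | ∃ φ : ℝ → X, φ τ = x ∧ (∀ s t, s ≤ t → t ≤ τ → φ t = T t s (φ s)) ∧
    (∃ M, ∀ t, t ≤ τ → N t (φ t) ≤ M) ∧
    famLpNorm N p (fun t => if t ≤ τ then φ t else 0) < ∞}

lemma famLpNorm_eq_eLpNorm {X : Type*} [NormedAddCommGroup X] (N : ℝ → X → ℝ) {p : ℝ≥0∞}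
    (hp : p ≠ 0) (f : ℝ → X) (hf : ∀ t, 0 ≤ N t (f t)) :
    famLpNorm N p f = eLpNorm (fun t => N t (f t)) p volume := by
  have h : (fun t => ‖N t (f t)‖ₑ) = fun t => ENNReal.ofReal (N t (f t)) :=
    funext fun t => Real.enorm_eq_ofReal (hf t)
  rcases eq_or_ne p ∞ with rfl | htop
  · rw [famLpNorm, if_pos rfl, eLpNorm_exponent_top, eLpNormEssSup, h]
  · rw [famLpNorm, if_neg htop, eLpNorm_eq_eLpNorm' hp htop, eLpNorm']
    congr 1
    apply lintegral_congr
    intro t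
    rw [Real.enorm_eq_ofReal (hf t)]


lemma measurable_N_comp {X : Type*} [NormedAddCommGroup X] [NormedSpace ℝ X] (N : ℝ → X → ℝ) (C ε : ℝ)
    (hN₂ : ∀ t (u : X), N t u ≤ C * Real.exp (ε * |t|) * ‖u‖)
    (hNadd : ∀ t (u v : X), N t (u + v) ≤ N t u + N t v)
    (hNsmul : ∀ t (r : ℝ) (u : X), N t (r • u) = |r| * N t u)
    (hNmeas : ∀ u : X, Measurable fun t => N t u)
    (w : ℝ → X) (hw : Continuous w) :
    Measurable fun ξ => N ξ (w ξ) := by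
  have hlip : ∀ ξ : ℝ, Continuous fun u : X => N ξ u := by
    intro ξ
    have key : ∀ u v : X, |N ξ u - N ξ v| ≤ C * Real.exp (ε * |ξ|) * ‖u - v‖ := by
      intro u v
      have h1 : N ξ ((u - v) + v) ≤ N ξ (u - v) + N ξ v := hNadd ξ _ _
      have hneg : N ξ ((-1 : ℝ) • (u - v)) = |(-1 : ℝ)| * N ξ (u - v) := hNsmul ξ _ _
      have h2 : N ξ ((v - u) + u) ≤ N ξ (v - u) + N ξ u := hNadd ξ _ _
      have h4 : N ξ (v - u) = N ξ (u - v) := by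
        rw [show v - u = (-1 : ℝ) • (u - v) by module] at *
        simpa using hneg
      have h3 := hN₂ ξ (u - v)
      rw [sub_add_cancel] at h1
      rw [sub_add_cancel] at h2
      rw [h4] at h2
      rw [abs_sub_le_iff]
      constructor <;> linarith
    have : LipschitzWith (Real.toNNReal (C * Real.exp (ε * |ξ|))) (N ξ) := by
      apply LipschitzWith.of_dist_le_mul
      intro u v
      rw [Real.dist_eq, dist_eq_norm]
      exact (key u v).trans (mul_le_mul_of_nonneg_right (Real.le_coe_toNNReal _) (norm_nonneg _))
    exact this.continuous
  have hu : Measurable (Function.uncurry fun (s : ℝ) (ξ : ℝ) => N ξ (w s)) := by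
    apply measurable_uncurry_of_continuous_of_measurable
    · intro ξ; exact (hlip ξ).comp hw
    · intro s; exact hNmeas (w s)
  exact hu.comp (measurable_id.prodMk measurable_id)

lemma m_identity (a b σ₁ σ₂ : ℝ) (hab : a ≤ b) (h12 : σ₁ ≤ σ₂) :
    max 0 (min (b - a) (b - σ₂)) = max 0 (min (b - a) (b - σ₁)) - max (min b σ₂ - max a σ₁) 0 := by
  simp only [max_def, min_def]
  split_ifs <;> linarith


lemma pair_solves {X : Type*} [NormedAddCommGroup X] [NormedSpace ℝ X] [CompleteSpace X]
    (T : ℝ → ℝ → X →L[ℝ] X) (w : ℝ → X)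
    (hw_traj : ∀ s σ : ℝ, s ≤ σ → w σ = T σ s (w s)) (a b : ℝ) (hab : a ≤ b) :
    SolvesEq T (fun ξ => (max 0 (min (b - a) (b - ξ))) • w ξ)
      (fun ξ => (-(Ioc a b).indicator (fun _ => (1:ℝ)) ξ) • w ξ) := by
  intro σ₁ σ₂ h12
  have hint : ∀ s ∈ Ioc σ₁ σ₂,
      T σ₂ s ((-(Ioc a b).indicator (fun _ => (1:ℝ)) s) • w s)
        = (-(Ioc a b).indicator (fun _ => (1:ℝ)) s) • w σ₂ := by
    intro s hs
    rw [_root_.map_smul, ← hw_traj s σ₂ hs.2]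
  rw [setIntegral_congr_fun measurableSet_Ioc hint, integral_smul_const]
  have hIoc : ∫ s in Ioc σ₁ σ₂, (-(Ioc a b).indicator (fun _ => (1:ℝ)) s)
      = -(max (min b σ₂ - max a σ₁) 0) := by
    rw [integral_neg, integral_indicator_const _ measurableSet_Ioc]
    rw [measureReal_def, Measure.restrict_apply measurableSet_Ioc, Set.Ioc_inter_Ioc, Real.volume_Ioc,
      ENNReal.toReal_ofReal', smul_eq_mul, mul_one]
  rw [hIoc]
  simp only []
  rw [_root_.map_smul, ← hw_traj σ₁ σ₂ h12, ← add_smul]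
  rw [m_identity a b σ₁ σ₂ hab h12]
  ring_nf

lemma Nval_y_eq {X : Type*} [NormedAddCommGroup X] [NormedSpace ℝ X] (N : ℝ → X → ℝ)
    (hNsmul : ∀ t (r : ℝ) (u : X), N t (r • u) = |r| * N t u)
    (w : ℝ → X) (a b : ℝ) :
    (fun ξ => N ξ ((-(Ioc a b).indicator (fun _ => (1:ℝ)) ξ) • w ξ))
      = (Ioc a b).indicator (fun ξ => N ξ (w ξ)) := by
  funext ξ
  by_cases h : ξ ∈ Ioc a b
  · rw [indicator_of_mem h, indicator_of_mem h, hNsmul]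
    norm_num
  · rw [indicator_of_notMem h, indicator_of_notMem h, hNsmul]
    norm_num


lemma pair_memY {X : Type*} [NormedAddCommGroup X] [NormedSpace ℝ X]
    (T : ℝ → ℝ → X →L[ℝ] X) (N : ℝ → X → ℝ) (C ε K c : ℝ)
    (hN₁ : ∀ t u, ‖u‖ ≤ N t u)
    (hN₂ : ∀ t (u : X), N t u ≤ C * Real.exp (ε * |t|) * ‖u‖)
    (hNadd : ∀ t (u v : X), N t (u + v) ≤ N t u + N t v)
    (hNsmul : ∀ t (r : ℝ) (u : X), N t (r • u) = |r| * N t u)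
    (hNmeas : ∀ u : X, Measurable fun t => N t u)
    (hBd : ∀ τ t (u : X), τ ≤ t → N t (T t τ u) ≤ K * Real.exp (c * (t - τ)) * N τ u)
    (hK : 0 < K)
    (p q : ℝ≥0∞) (hp1 : 1 ≤ p) (hq1 : 1 ≤ q)
    (w : ℝ → X) (hw_cont : Continuous w)
    (hw_traj : ∀ s σ : ℝ, s ≤ σ → w σ = T σ s (w s))
    (τ M : ℝ) (hM : ∀ ξ, ξ ≤ τ → N ξ (w ξ) ≤ M)
    (hLp : famLpNorm N p (fun ξ => if ξ ≤ τ then w ξ else 0) < ∞)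
    (a b : ℝ) (hτa : τ ≤ a) (hab : a < b) :
    MemY1 N p (fun ξ => (max 0 (min (b - a) (b - ξ))) • w ξ) ∧
    MemY2 N q (fun ξ => (-(Ioc a b).indicator (fun _ => (1:ℝ)) ξ) • w ξ) := by
  have hp0 : p ≠ 0 := (lt_of_lt_of_le zero_lt_one hp1).ne'
  have hq0 : q ≠ 0 := (lt_of_lt_of_le zero_lt_one hq1).ne'
  have hNneg : ∀ t (u : X), 0 ≤ N t u := fun t u => (norm_nonneg u).trans (hN₁ t u)
  set G : ℝ → ℝ := fun ξ => N ξ (w ξ) with hGdef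
  have hG_meas : Measurable G := measurable_N_comp N C ε hN₂ hNadd hNsmul hNmeas w hw_cont
  have hG_nonneg : ∀ ξ, 0 ≤ G ξ := fun ξ => hNneg ξ (w ξ)
  set B : ℝ := max M (K * Real.exp (|c| * (b - τ)) * N τ (w τ)) with hBdef
  have hB0 : 0 ≤ B := le_trans (mul_nonneg (mul_nonneg hK.le (Real.exp_pos _).le) (hNneg τ (w τ))) (le_max_right _ _)
  have hwB : ∀ ξ, ξ ≤ b → G ξ ≤ B := by
    intro ξ hξ
    rcases le_total ξ τ with h | h
    · exact le_trans (hM ξ h) (le_max_left _ _)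
    · have h1 : G ξ = N ξ (T ξ τ (w τ)) := by simp only [hGdef]; rw [← hw_traj τ ξ h]
      have h2 := hBd τ ξ (w τ) h
      have h3 : Real.exp (c * (ξ - τ)) ≤ Real.exp (|c| * (b - τ)) := by
        apply Real.exp_le_exp.2
        have : c * (ξ - τ) ≤ |c| * (ξ - τ) :=
          mul_le_mul_of_nonneg_right (le_abs_self c) (by linarith)
        have : |c| * (ξ - τ) ≤ |c| * (b - τ) :=
          mul_le_mul_of_nonneg_left (by linarith) (abs_nonneg c)
        linarith [mul_le_mul_of_nonneg_right (le_abs_self c) (show (0:ℝ) ≤ ξ - τ by linarith)]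
      calc G ξ = N ξ (T ξ τ (w τ)) := h1
        _ ≤ K * Real.exp (c * (ξ - τ)) * N τ (w τ) := h2
        _ ≤ K * Real.exp (|c| * (b - τ)) * N τ (w τ) := by
            apply mul_le_mul_of_nonneg_right _ (hNneg τ (w τ))
            exact mul_le_mul_of_nonneg_left h3 hK.le
        _ ≤ B := le_max_right _ _
  have hm_nonneg : ∀ ξ : ℝ, 0 ≤ max 0 (min (b - a) (b - ξ)) := fun ξ => le_max_left _ _
  have hm_le : ∀ ξ : ℝ, max 0 (min (b - a) (b - ξ)) ≤ b - a := fun ξ =>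
    max_le (by linarith) (min_le_left _ _)
  have hm_zero : ∀ ξ : ℝ, b < ξ → max 0 (min (b - a) (b - ξ)) = 0 := by
    intro ξ hξ
    rw [min_eq_right (by linarith), max_eq_left (by linarith)]
  have hv_val : ∀ ξ, N ξ ((max 0 (min (b - a) (b - ξ))) • w ξ)
      = max 0 (min (b - a) (b - ξ)) * G ξ := by
    intro ξ
    rw [hNsmul, abs_of_nonneg (hm_nonneg ξ)]
  constructor
  · refine ⟨?_, ⟨(b - a) * B, ?_⟩, ?_⟩
    · exact (continuous_const.max (continuous_const.min
        (continuous_const.sub continuous_id))).smul hw_cont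
    · intro ξ
      rw [hv_val]
      rcases le_or_gt ξ b with h | h
      · exact mul_le_mul (hm_le ξ) (hwB ξ h) (hG_nonneg ξ) (by linarith)
      · rw [hm_zero ξ h, zero_mul]
        exact mul_nonneg (by linarith) hB0
    · rw [famLpNorm_eq_eLpNorm N hp0 _ (fun ξ => hNneg ξ _)]
      set g₁ : ℝ → ℝ := (Iic τ).indicator G with hg₁def
      set g₂ : ℝ → ℝ := (Ioc τ b).indicator (fun _ => (b - a) * B) with hg₂def
      have hg₁_nonneg : ∀ ξ, 0 ≤ g₁ ξ := fun ξ => indicator_nonneg (fun ξ _ => hG_nonneg ξ) ξ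
      have hg₂_nonneg : ∀ ξ, 0 ≤ g₂ ξ := fun ξ =>
        indicator_nonneg (fun ξ _ => mul_nonneg (by linarith) hB0) ξ
      have hpt : ∀ ξ, N ξ ((max 0 (min (b - a) (b - ξ))) • w ξ) ≤ (b - a) * g₁ ξ + g₂ ξ := by
        intro ξ
        rw [hv_val]
        rcases le_or_gt ξ τ with h | h
        · have : g₁ ξ = G ξ := indicator_of_mem (mem_Iic.2 h) G
          have h2 : g₂ ξ ≥ 0 := hg₂_nonneg ξ
          rw [this]
          have := mul_le_mul_of_nonneg_right (hm_le ξ) (hG_nonneg ξ)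
          linarith
        · have hg₁0 : g₁ ξ = 0 := indicator_of_notMem (by simpa using h) G
          rcases le_or_gt ξ b with h' | h'
          · have : g₂ ξ = (b - a) * B := indicator_of_mem (mem_Ioc.2 ⟨h, h'⟩) _
            rw [hg₁0, this, mul_zero, zero_add]
            exact mul_le_mul (hm_le ξ) (hwB ξ h') (hG_nonneg ξ) (by linarith)
          · rw [hm_zero ξ h', zero_mul, hg₁0, mul_zero, zero_add]
            exact hg₂_nonneg ξ
      have hmono : eLpNorm (fun ξ => N ξ ((max 0 (min (b - a) (b - ξ))) • w ξ)) p volume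
          ≤ eLpNorm (fun ξ => (b - a) * g₁ ξ + g₂ ξ) p volume := by
        apply eLpNorm_mono
        intro ξ
        rw [Real.norm_eq_abs, Real.norm_eq_abs, abs_of_nonneg (by rw [hv_val]; exact mul_nonneg (hm_nonneg ξ) (hG_nonneg ξ)),
          abs_of_nonneg (add_nonneg (mul_nonneg (by linarith) (hg₁_nonneg ξ)) (hg₂_nonneg ξ))]
        exact hpt ξ
      have hg₁_meas : AEStronglyMeasurable (fun ξ => (b - a) * g₁ ξ) volume :=
        (measurable_const.mul (hG_meas.indicator measurableSet_Iic)).aestronglyMeasurable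
      have hg₂_meas : AEStronglyMeasurable g₂ volume :=
        (measurable_const.indicator measurableSet_Ioc).aestronglyMeasurable
      have hadd := eLpNorm_add_le hg₁_meas hg₂_meas hp1
      have hfin₁ : eLpNorm (fun ξ => (b - a) * g₁ ξ) p volume < ∞ := by
        have heq : (fun ξ => (b - a) * g₁ ξ) = (b - a) • g₁ := rfl
        rw [heq]
        apply lt_of_le_of_lt (eLpNorm_const_smul_le)
        apply ENNReal.mul_lt_top ENNReal.coe_lt_top
        have heq2 : (fun ξ => N ξ (if ξ ≤ τ then w ξ else 0)) = g₁ := by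
          funext ξ
          rcases le_or_gt ξ τ with h | h
          · rw [if_pos h, hg₁def, indicator_of_mem (mem_Iic.2 h)]
          · rw [if_neg (not_le.2 h), hg₁def, indicator_of_notMem (by simpa using h)]
            have := hNsmul ξ 0 0
            simpa using this
        rw [famLpNorm_eq_eLpNorm N hp0 _ (fun ξ => hNneg ξ _), heq2] at hLp
        exact hLp
      have hfin₂ : eLpNorm g₂ p volume < ∞ := by
        apply lt_of_le_of_lt (eLpNorm_indicator_const_le _ _)
        apply ENNReal.mul_lt_top ENNReal.coe_lt_top
        rw [Real.volume_Ioc]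
        exact ENNReal.rpow_lt_top_of_nonneg (by positivity) ENNReal.ofReal_ne_top
      calc eLpNorm (fun ξ => N ξ ((max 0 (min (b - a) (b - ξ))) • w ξ)) p volume
          ≤ _ := hmono
        _ ≤ _ := hadd
        _ < ∞ := ENNReal.add_lt_top.2 ⟨hfin₁, hfin₂⟩
  · constructor
    · exact (((measurable_const.indicator measurableSet_Ioc :
        Measurable ((Ioc a b).indicator (fun _ => (1:ℝ)))).neg).aestronglyMeasurable).smul
        hw_cont.aestronglyMeasurable
    · rw [famLpNorm_eq_eLpNorm N hq0 _ (fun ξ => hNneg ξ _),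
        Nval_y_eq N hNsmul w a b]
      have hmono : eLpNorm ((Ioc a b).indicator G) q volume
          ≤ eLpNorm ((Ioc a b).indicator (fun _ => B)) q volume := by
        apply eLpNorm_mono
        intro ξ
        rw [Real.norm_eq_abs, Real.norm_eq_abs]
        by_cases h : ξ ∈ Ioc a b
        · rw [indicator_of_mem h, indicator_of_mem h, abs_of_nonneg (hG_nonneg ξ),
            abs_of_nonneg hB0]
          exact hwB ξ h.2
        · rw [indicator_of_notMem h, indicator_of_notMem h]
      apply lt_of_le_of_lt (hmono.trans (eLpNorm_indicator_const_le _ _))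
      apply ENNReal.mul_lt_top ENNReal.coe_lt_top
      rw [Real.volume_Ioc]
      exact ENNReal.rpow_lt_top_of_nonneg (by positivity) ENNReal.ofReal_ne_top

/-- In the admissibility setting with `(p,q) ≠ (∞,1)`, for `u ∈ F^u_τ`
and `t > τ` one has
`‖u‖_τ ≤ 2 K e^c normG² (t-τ)^{-(1 - 1/q + 1/p)} ‖T t τ u‖_t`; consequently there is
`T₀ > 0` such that `‖T t τ u‖_t ≥ 2 ‖u‖_τ` whenever `t - τ ≥ T₀`. -/
theorem unstable_doubling_estimate
    {X : Type*} [NormedAddCommGroup X] [NormedSpace ℝ X] [CompleteSpace X]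
    (T : ℝ → ℝ → X →L[ℝ] X) (N : ℝ → X → ℝ) (C ε K c normG : ℝ)
    (hN₁ : ∀ t u, ‖u‖ ≤ N t u)
    (hN₂ : ∀ t (u : X), N t u ≤ C * Real.exp (ε * |t|) * ‖u‖)
    (hNadd : ∀ t (u v : X), N t (u + v) ≤ N t u + N t v)
    (hNsmul : ∀ t (r : ℝ) (u : X), N t (r • u) = |r| * N t u)
    (hNmeas : ∀ u : X, Measurable fun t => N t u)
    (hId : ∀ t, T t t = ContinuousLinearMap.id ℝ X)
    (hCoc : ∀ τ s t, τ ≤ s → s ≤ t → ∀ u, T t s (T s τ u) = T t τ u)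
    (hCont : ∀ τ (u : X), ContinuousOn (fun t => T t τ u) (Ici τ))
    (hContB : ∀ τ (u : X), ContinuousOn (fun s => T τ s u) (Iic τ))
    (hBd : ∀ τ t (u : X), τ ≤ t → N t (T t τ u) ≤ K * Real.exp (c * (t - τ)) * N τ u)
    (hK : 0 < K) (hnormG : 0 < normG)
    (p q : ℝ≥0∞) (hq : 1 ≤ q) (hpq : q ≤ p) (hpq' : ¬(p = ∞ ∧ q = 1))
    -- boundedness of the solution operator `G`, in both sup- and `L^p`-components:
    (hG : ∀ x y : ℝ → X, MemY1 N p x → MemY2 N q y → SolvesEq T x y →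
      (∀ s, N s (x s) ≤ normG * (famLpNorm N q y).toReal) ∧
      famLpNorm N p x ≤ ENNReal.ofReal normG * famLpNorm N q y) :
    (∀ τ t (u : X), τ < t → u ∈ Fu T N p τ →
      N τ u ≤ 2 * K * Real.exp c * normG ^ 2 *
        (t - τ) ^ (-(1 - (q⁻¹).toReal + (p⁻¹).toReal)) * N t (T t τ u)) ∧
    ∃ T₀ > (0 : ℝ), ∀ τ t (u : X), u ∈ Fu T N p τ → T₀ ≤ t - τ →
      2 * N τ u ≤ N t (T t τ u) := by
  have hNneg : ∀ t (u : X), 0 ≤ N t u := fun t u => (norm_nonneg u).trans (hN₁ t u)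
  have hp1 : 1 ≤ p := le_trans hq hpq
  have hp0 : p ≠ 0 := (lt_of_lt_of_le zero_lt_one hp1).ne'
  have hq0 : q ≠ 0 := (lt_of_lt_of_le zero_lt_one hq).ne'
  have hβ0 : 0 ≤ 1 / q.toReal - 1 / p.toReal := by
    by_cases hqt : q = ∞
    · have hpt : p = ∞ := top_le_iff.1 (hqt ▸ hpq)
      simp [hqt, hpt]
    · have hqpos : 0 < q.toReal := ENNReal.toReal_pos hq0 hqt
      by_cases hpt : p = ∞
      · simp only [hpt, ENNReal.toReal_top, div_zero, sub_zero]
        positivity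
      · have hle : q.toReal ≤ p.toReal := ENNReal.toReal_mono hpt hpq
        have := one_div_le_one_div_of_le hqpos hle
        linarith
  have part1 : ∀ τ t (u : X), τ < t → u ∈ Fu T N p τ →
      N τ u ≤ 2 * K * Real.exp c * normG ^ 2 *
        (t - τ) ^ (-(1 - (q⁻¹).toReal + (p⁻¹).toReal)) * N t (T t τ u) := by
    intro τ t u hτt hu
    obtain ⟨φ, hφτ, hφtraj, ⟨M, hM⟩, hLpφ⟩ := hu
    set w : ℝ → X := fun ξ => if ξ ≤ τ then φ ξ else T ξ τ u with hwdef
    have hwτ : w τ = u := by simp [hwdef, hφτ]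
    have hw_le : ∀ ξ, ξ ≤ τ → w ξ = φ ξ := fun ξ h => if_pos h
    have hw_ge : ∀ ξ, τ ≤ ξ → w ξ = T ξ τ u := by
      intro ξ h
      by_cases hξ : ξ ≤ τ
      · have hξτ : ξ = τ := le_antisymm hξ h
        subst hξτ
        rw [hwτ, hId]
        rfl
      · exact if_neg hξ
    have hw_traj : ∀ s σ : ℝ, s ≤ σ → w σ = T σ s (w s) := by
      intro s σ hsσ
      rcases le_total σ τ with h | h
      · rw [hw_le σ h, hw_le s (hsσ.trans h)]
        exact hφtraj s σ hsσ h
      · rcases le_total s τ with h' | h'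
        · rw [hw_ge σ h, hw_le s h']
          have hφτs : φ τ = T τ s (φ s) := hφtraj s τ h' le_rfl
          rw [← hφτ, hφτs, hCoc s τ σ h' h]
        · rw [hw_ge σ h, hw_ge s h']
          exact (hCoc τ s σ h' hsσ u).symm
    have hw_cont : Continuous w := by
      rw [continuous_iff_continuousAt]
      intro x
      have hcont : ContinuousOn w (Ici (x - 1)) :=
        ContinuousOn.congr (hCont (x - 1) (w (x - 1))) (fun σ hσ => hw_traj (x - 1) σ hσ)
      exact hcont.continuousAt (Ici_mem_nhds (by linarith))
    have hLp : famLpNorm N p (fun ξ => if ξ ≤ τ then w ξ else 0) < ∞ := by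
      have heq : (fun ξ => if ξ ≤ τ then w ξ else 0)
          = (fun ξ => if ξ ≤ τ then φ ξ else 0) := by
        funext ξ
        by_cases h : ξ ≤ τ <;> simp [h, hwdef]
      rw [heq]
      exact hLpφ
    set G : ℝ → ℝ := fun ξ => N ξ (w ξ) with hGdef
    have hG_meas : Measurable G := measurable_N_comp N C ε hN₂ hNadd hNsmul hNmeas w hw_cont
    have hNt0 : 0 ≤ N t (T t τ u) := hNneg _ _
    have hMw : ∀ ξ, ξ ≤ τ → N ξ (w ξ) ≤ M := fun ξ h => by
      rw [hw_le ξ h]; exact hM ξ h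
    -- Pair A : (a, b) = (τ, t)
    obtain ⟨hY1A, hY2A⟩ := pair_memY T N C ε K c hN₁ hN₂ hNadd hNsmul hNmeas hBd hK p q hp1 hq
      w hw_cont hw_traj τ M hMw hLp τ t le_rfl hτt
    have hSA := pair_solves T w hw_traj τ t hτt.le
    obtain ⟨hGA, -⟩ := hG _ _ hY1A hY2A hSA
    have hA := hGA τ
    have hsc : max 0 (min (t - τ) (t - τ)) = t - τ := by
      rw [min_self]; exact max_eq_right (by linarith)
    rw [hsc, hwτ, hNsmul, abs_of_nonneg (by linarith : (0:ℝ) ≤ t - τ)] at hA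
    -- Pair B : (a, b) = (t + e, t + e + 1)
    set e : ℝ := if c < 0 then 1 else 0 with hedef
    have he0 : 0 ≤ e := by rw [hedef]; split_ifs <;> norm_num
    obtain ⟨hY1B, hY2B⟩ := pair_memY T N C ε K c hN₁ hN₂ hNadd hNsmul hNmeas hBd hK p q hp1 hq
      w hw_cont hw_traj τ M hMw hLp (t + e) (t + e + 1) (by linarith) (by linarith)
    have hSB := pair_solves T w hw_traj (t + e) (t + e + 1) (by linarith)
    obtain ⟨-, hGB⟩ := hG _ _ hY1B hY2B hSB
    -- value of famLpNorm of yA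
    have hyA : famLpNorm N q
        (fun ξ => (-(Ioc τ t).indicator (fun _ => (1:ℝ)) ξ) • w ξ)
        = eLpNorm ((Ioc τ t).indicator G) q volume := by
      rw [famLpNorm_eq_eLpNorm N hq0 _ (fun ξ => hNneg ξ _), Nval_y_eq N hNsmul w τ t]
    -- Hölder
    have hHold := eLpNorm_le_eLpNorm_mul_rpow_measure_univ hpq
      (hG_meas.aestronglyMeasurable.restrict :
        AEStronglyMeasurable G (volume.restrict (Ioc τ t)))
    rw [Measure.restrict_apply_univ, Real.volume_Ioc,
      ← eLpNorm_indicator_eq_eLpNorm_restrict measurableSet_Ioc,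
      ← eLpNorm_indicator_eq_eLpNorm_restrict measurableSet_Ioc] at hHold
    -- p-norm bounds
    have h1 : eLpNorm ((Ioc τ t).indicator G) p volume
        ≤ eLpNorm ((Iic t).indicator G) p volume := by
      apply eLpNorm_mono
      intro ξ
      by_cases h : ξ ∈ Ioc τ t
      · rw [indicator_of_mem h, indicator_of_mem (mem_Iic.2 h.2)]
      · rw [indicator_of_notMem h]
        simp only [norm_zero]
        exact norm_nonneg _
    have h2 : eLpNorm ((Iic t).indicator G) p volume
        ≤ famLpNorm N p (fun ξ => (max 0 (min (t + e + 1 - (t + e)) (t + e + 1 - ξ))) • w ξ) := by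
      rw [famLpNorm_eq_eLpNorm N hp0 _ (fun ξ => hNneg ξ _)]
      apply eLpNorm_mono
      intro ξ
      rw [Real.norm_eq_abs, Real.norm_eq_abs]
      by_cases h : ξ ∈ Iic t
      · rw [indicator_of_mem h]
        have hba : t + e + 1 - (t + e) = (1:ℝ) := by ring
        have hmin : min (t + e + 1 - (t + e)) (t + e + 1 - ξ) = 1 := by
          rw [hba]
          exact min_eq_left (by simp only [mem_Iic] at h; linarith)
        rw [hmin, max_eq_right zero_le_one, one_smul]
      · rw [indicator_of_notMem h]
        simp only [abs_zero]
        exact abs_nonneg _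
    have h4 : famLpNorm N q
        (fun ξ => (-(Ioc (t + e) (t + e + 1)).indicator (fun _ => (1:ℝ)) ξ) • w ξ)
        ≤ ENNReal.ofReal (K * Real.exp c * N t (T t τ u)) := by
      rw [famLpNorm_eq_eLpNorm N hq0 _ (fun ξ => hNneg ξ _), Nval_y_eq N hNsmul w _ _]
      have hpt : ∀ ξ ∈ Ioc (t + e) (t + e + 1), G ξ ≤ K * Real.exp c * N t (T t τ u) := by
        intro ξ hξ
        have hξt : t ≤ ξ := by have := hξ.1; linarith
        have hGξ : G ξ = N ξ (T ξ t (w t)) := by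
          simp only [hGdef]
          rw [← hw_traj t ξ hξt]
        have hBξ := hBd t ξ (w t) hξt
        have hwt : w t = T t τ u := hw_ge t hτt.le
        have hexp : Real.exp (c * (ξ - t)) ≤ Real.exp c := by
          apply Real.exp_le_exp.2
          by_cases hc : c < 0
          · have he1 : e = 1 := if_pos hc
            have : (1:ℝ) ≤ ξ - t := by have := hξ.1; rw [he1] at this; linarith
            nlinarith
          · have he1 : e = 0 := if_neg hc
            have h1' : ξ - t ≤ 1 := by have := hξ.2; rw [he1] at this; linarith
            push_neg at hc
            nlinarith
        calc G ξ = N ξ (T ξ t (w t)) := hGξ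
          _ ≤ K * Real.exp (c * (ξ - t)) * N t (w t) := hBξ
          _ ≤ K * Real.exp c * N t (T t τ u) := by
              rw [hwt]
              apply mul_le_mul_of_nonneg_right _ hNt0
              exact mul_le_mul_of_nonneg_left hexp hK.le
      calc eLpNorm ((Ioc (t + e) (t + e + 1)).indicator G) q volume
          ≤ eLpNorm ((Ioc (t + e) (t + e + 1)).indicator
              (fun _ => K * Real.exp c * N t (T t τ u))) q volume := by
            apply eLpNorm_mono
            intro ξ
            by_cases h : ξ ∈ Ioc (t + e) (t + e + 1)
            · rw [indicator_of_mem h, indicator_of_mem h, Real.norm_eq_abs, Real.norm_eq_abs,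
                abs_of_nonneg (hNneg ξ (w ξ)), abs_of_nonneg (by positivity)]
              exact hpt ξ h
            · rw [indicator_of_notMem h, indicator_of_notMem h]
        _ ≤ ‖K * Real.exp c * N t (T t τ u)‖₊
              * volume (Ioc (t + e) (t + e + 1)) ^ (1 / q.toReal) :=
            eLpNorm_indicator_const_le _ _
        _ = ENNReal.ofReal (K * Real.exp c * N t (T t τ u)) := by
            rw [Real.volume_Ioc, show t + e + 1 - (t + e) = (1:ℝ) by ring, ENNReal.ofReal_one,
              ENNReal.one_rpow, mul_one, ← enorm_eq_nnnorm, Real.enorm_eq_ofReal (by positivity)]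
    -- assemble the ENNReal chain
    set R : ℝ≥0∞ := ENNReal.ofReal normG * ENNReal.ofReal (K * Real.exp c * N t (T t τ u))
        * ENNReal.ofReal (t - τ) ^ (1 / q.toReal - 1 / p.toReal) with hRdef
    have hchain : eLpNorm ((Ioc τ t).indicator G) q volume ≤ R := by
      calc eLpNorm ((Ioc τ t).indicator G) q volume
          ≤ eLpNorm ((Ioc τ t).indicator G) p volume
              * ENNReal.ofReal (t - τ) ^ (1 / q.toReal - 1 / p.toReal) := hHold
        _ ≤ (ENNReal.ofReal normG * ENNReal.ofReal (K * Real.exp c * N t (T t τ u)))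
              * ENNReal.ofReal (t - τ) ^ (1 / q.toReal - 1 / p.toReal) := by
            gcongr
            exact ((h1.trans h2).trans hGB).trans (mul_le_mul_right h4 _)
        _ = R := by rw [hRdef, mul_assoc]
    have hRfin : R ≠ ∞ := by
      rw [hRdef]
      apply ENNReal.mul_ne_top (ENNReal.mul_ne_top ENNReal.ofReal_ne_top ENNReal.ofReal_ne_top)
      exact (ENNReal.rpow_lt_top_of_nonneg hβ0 ENNReal.ofReal_ne_top).ne
    have hRval : R.toReal = normG * (K * Real.exp c * N t (T t τ u))
        * (t - τ) ^ (1 / q.toReal - 1 / p.toReal) := by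
      rw [hRdef, ENNReal.toReal_mul, ENNReal.toReal_mul, ENNReal.toReal_ofReal hnormG.le,
        ENNReal.toReal_ofReal (by positivity), ← ENNReal.toReal_rpow,
        ENNReal.toReal_ofReal (by linarith : (0:ℝ) ≤ t - τ)]
    have hAA : (t - τ) * N τ u
        ≤ normG * (normG * (K * Real.exp c * N t (T t τ u))
            * (t - τ) ^ (1 / q.toReal - 1 / p.toReal)) := by
      rw [hyA] at hA
      have := ENNReal.toReal_mono hRfin hchain
      rw [hRval] at this
      calc (t - τ) * N τ u ≤ normG * (eLpNorm ((Ioc τ t).indicator G) q volume).toReal := hA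
        _ ≤ _ := mul_le_mul_of_nonneg_left this hnormG.le
    -- final real arithmetic
    have hexp' : -(1 - (q⁻¹).toReal + (p⁻¹).toReal) = (1 / q.toReal - 1 / p.toReal) - 1 := by
      rw [ENNReal.toReal_inv, ENNReal.toReal_inv, one_div, one_div]
      ring
    have hP : (t - τ) ^ (-(1 - (q⁻¹).toReal + (p⁻¹).toReal))
        = (t - τ) ^ (1 / q.toReal - 1 / p.toReal) / (t - τ) := by
      rw [hexp', Real.rpow_sub (by linarith), Real.rpow_one]
    rw [hP, show 2 * K * Real.exp c * normG ^ 2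
        * ((t - τ) ^ (1 / q.toReal - 1 / p.toReal) / (t - τ)) * N t (T t τ u)
      = (2 * (K * Real.exp c) * normG ^ 2 * (t - τ) ^ (1 / q.toReal - 1 / p.toReal)
          * N t (T t τ u)) / (t - τ) by ring, le_div_iff₀ (by linarith : (0:ℝ) < t - τ)]
    have hPn : 0 ≤ (t - τ) ^ (1 / q.toReal - 1 / p.toReal) :=
      Real.rpow_nonneg (by linarith) _
    nlinarith [mul_nonneg (mul_nonneg (mul_nonneg (mul_nonneg hK.le (Real.exp_pos c).le)
      (sq_nonneg normG)) hPn) hNt0]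
  refine ⟨part1, ?_⟩
  set α : ℝ := 1 - (q⁻¹).toReal + (p⁻¹).toReal with hαdef
  have hα0 : 0 < α := by
    have hqle : (q⁻¹).toReal ≤ 1 := by
      have : q⁻¹ ≤ 1 := ENNReal.inv_le_one.2 hq
      have := ENNReal.toReal_mono ENNReal.one_ne_top this
      simpa using this
    have hple : 0 ≤ (p⁻¹).toReal := ENNReal.toReal_nonneg
    rcases eq_or_ne q 1 with rfl | hq1'
    · have hp_ne : p ≠ ∞ := fun h => hpq' ⟨h, rfl⟩
      have hpinv : (0:ℝ) < (p⁻¹).toReal := by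
        apply ENNReal.toReal_pos
        · simp only [ne_eq, ENNReal.inv_eq_zero]
          exact hp_ne
        · exact ENNReal.inv_ne_top.2 hp0
      simp only [hαdef, inv_one, ENNReal.toReal_one]
      linarith
    · have hlt : q⁻¹ < 1 := ENNReal.inv_lt_one.2 (lt_of_le_of_ne hq (Ne.symm hq1'))
      have hlt' : (q⁻¹).toReal < 1 := by
        have := (ENNReal.toReal_lt_toReal (hlt.trans_le le_top).ne ENNReal.one_ne_top).2 hlt
        simpa using this
      rw [hαdef]
      linarith
  set D : ℝ := 2 * K * Real.exp c * normG ^ 2 with hDdef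
  have hD0 : 0 < D := by positivity
  refine ⟨max 1 ((2 * D) ^ α⁻¹), lt_of_lt_of_le zero_lt_one (le_max_left _ _), ?_⟩
  intro τ t u hu hT
  have hτt : τ < t := by
    have h1 : (1:ℝ) ≤ t - τ := le_trans (le_max_left _ _) hT
    linarith
  have hkey := part1 τ t u hτt hu
  have hNt0 : 0 ≤ N t (T t τ u) := hNneg _ _
  have h2D : (0:ℝ) < 2 * D := by linarith
  have hpow : (t - τ) ^ (-α) ≤ (2 * D)⁻¹ := by
    have hup : 2 * D ≤ (t - τ) ^ α := by
      have h1 : ((2 * D) ^ α⁻¹) ^ α ≤ (t - τ) ^ α :=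
        Real.rpow_le_rpow (Real.rpow_nonneg h2D.le _)
          (le_trans (le_max_right _ _) hT) hα0.le
      rwa [← Real.rpow_mul h2D.le, inv_mul_cancel₀ hα0.ne', Real.rpow_one] at h1
    rw [Real.rpow_neg (by linarith : (0:ℝ) ≤ t - τ)]
    exact inv_anti₀ h2D hup
  have h1 : D * ((t - τ) ^ (-α)) ≤ D * (2 * D)⁻¹ := mul_le_mul_of_nonneg_left hpow hD0.le
  have h2 : D * (2 * D)⁻¹ = 1 / 2 := by
    field_simp
  have h3 : D * ((t - τ) ^ (-α)) * N t (T t τ u) ≤ 1 / 2 * N t (T t τ u) :=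
    mul_le_mul_of_nonneg_right (h1.trans_eq h2) hNt0
  have h4 : D * ((t - τ) ^ (-α)) * N t (T t τ u) = D * (t - τ) ^ (-α) * N t (T t τ u) := rfl
  linarith [hkey, h3]
end

section
/- If (T(t,τ))_{t≥τ} admits an exponential dichotomy with respect to the family of norms ‖·‖_t with stable subspaces X^s(τ) = P(τ)X and unstable subspaces X^u(τ) = Ker P(τ), then X^s(τ) = F^s_τ and X^u(τ) = F^u_τ for every τ ∈ ℝ; consequently the family of dichotomic projections P(τ) is unique. -/
open MeasureTheory Set Filter
open scoped ENNReal

/-- Exponential dichotomy of the evolutionary family `T` with respect to the family of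
norms `N`, with projections `P t`, inverse maps `S τ t` (the inverses of
`T t τ : Ker P τ → Ker P t`, applied after `Q t = I - P t`), and constants `a < 0 < b`,
`D > 0`. -/
def IsDichotomy {X : Type*} [NormedAddCommGroup X] [NormedSpace ℝ X]
    (T : ℝ → ℝ → X →L[ℝ] X) (N : ℝ → X → ℝ)
    (P : ℝ → X →L[ℝ] X) (S : ℝ → ℝ → X →L[ℝ] X) (a b D : ℝ) : Prop :=
  a < 0 ∧ 0 < b ∧ 0 < D ∧
  (∀ t, (P t).comp (P t) = P t) ∧
  (∀ τ t, τ ≤ t → (P t).comp (T t τ) = (T t τ).comp (P τ)) ∧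
  (∀ τ t, τ ≤ t → ∀ u, T t τ (S τ t (u - P t u)) = u - P t u) ∧
  (∀ τ t, τ ≤ t → ∀ u, S τ t (T t τ u - P t (T t τ u)) = u - P τ u) ∧
  (∀ τ t, τ ≤ t → ∀ u, P τ (S τ t (u - P t u)) = 0) ∧
  (∀ τ t u, τ ≤ t → N t (T t τ (P τ u)) ≤ D * Real.exp (a * (t - τ)) * N τ u) ∧
  (∀ τ t u, τ ≤ t → N τ (S τ t (u - P t u)) ≤ D * Real.exp (-b * (t - τ)) * N t u)

section Aux

open Real Filter

lemma myAux_integrable_exp_abs {γ : ℝ} (hγ : γ < 0) :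
    Integrable (fun t : ℝ => Real.exp (γ * |t|)) := by
  have hpos : 0 < -γ := neg_pos.2 hγ
  have hIoi : IntegrableOn (fun t : ℝ => Real.exp (γ * t)) (Ioi (0:ℝ)) := by
    simpa [neg_neg] using exp_neg_integrableOn_Ioi 0 hpos
  have hIci : IntegrableOn (fun t : ℝ => Real.exp (γ * |t|)) (Ici (0:ℝ)) := by
    rw [integrableOn_Ici_iff_integrableOn_Ioi]
    exact hIoi.congr_fun (fun t ht => by rw [abs_of_pos (mem_Ioi.1 ht)]) measurableSet_Ioi
  have hIio : IntegrableOn (fun t : ℝ => Real.exp (γ * |t|)) (Iio (0:ℝ)) := by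
    have hmp : MeasurePreserving (Neg.neg : ℝ → ℝ)
        (volume.restrict (Iio (0:ℝ))) (volume.restrict (Ioi (0:ℝ))) := by
      have h := (Measure.measurePreserving_neg (volume : Measure ℝ)).restrict_preimage
        (measurableSet_Ioi (a := (0:ℝ)))
      have hpre : (Neg.neg : ℝ → ℝ) ⁻¹' (Ioi 0) = Iio 0 := by ext t; simp
      rwa [hpre] at h
    have hfm : AEStronglyMeasurable (fun t : ℝ => Real.exp (γ * t))
        (volume.restrict (Ioi (0:ℝ))) :=
      (Real.continuous_exp.comp (continuous_const.mul continuous_id)).aestronglyMeasurable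
    have h2 : Integrable ((fun t : ℝ => Real.exp (γ * t)) ∘ Neg.neg)
        (volume.restrict (Iio (0:ℝ))) := (hmp.integrable_comp hfm).2 hIoi
    exact MeasureTheory.IntegrableOn.congr_fun h2 (fun t ht => by
      simp only [Function.comp_apply]
      rw [abs_of_neg (mem_Iio.1 ht)]) measurableSet_Iio
  have hU : Iio (0:ℝ) ∪ Ici 0 = univ := Iio_union_Ici
  rw [← integrableOn_univ, ← hU]
  exact hIio.union hIci

lemma myAux_integrable_exp_abs_sub {γ : ℝ} (hγ : γ < 0) (τ : ℝ) :
    Integrable (fun t : ℝ => Real.exp (γ * |t - τ|)) :=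
  (myAux_integrable_exp_abs hγ).comp_sub_right τ

lemma myAux_famLpNorm_lt_top {X : Type*} [NormedAddCommGroup X]
    (N : ℝ → X → ℝ) (p : ℝ≥0∞) (hp : 1 ≤ p) (f : ℝ → X) (τ B γ : ℝ)
    (hγ : γ < 0) (hB : 0 ≤ B)
    (hnn : ∀ t, 0 ≤ N t (f t))
    (hle : ∀ t, N t (f t) ≤ B * Real.exp (γ * |t - τ|)) :
    famLpNorm N p f < ∞ := by
  have hexp1 : ∀ t : ℝ, Real.exp (γ * |t - τ|) ≤ 1 := fun t =>
    Real.exp_le_one_iff.2 (mul_nonpos_of_nonpos_of_nonneg hγ.le (abs_nonneg _))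
  unfold famLpNorm
  split_ifs with h
  · refine lt_of_le_of_lt (essSup_le_of_ae_le (ENNReal.ofReal B) (ae_of_all _ fun t => ?_))
      ENNReal.ofReal_lt_top
    exact ENNReal.ofReal_le_ofReal ((hle t).trans
      (by nlinarith [hexp1 t, Real.exp_pos (γ * |t - τ|)]))
  · set r := p.toReal with hr
    have hp0 : p ≠ 0 := (zero_lt_one.trans_le hp).ne'
    have hrpos : 0 < r := ENNReal.toReal_pos hp0 h
    have hγr : γ * r < 0 := mul_neg_of_neg_of_pos hγ hrpos
    have key : ∀ t, ENNReal.ofReal (N t (f t)) ^ r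
        ≤ ENNReal.ofReal (B ^ r * Real.exp ((γ * r) * |t - τ|)) := by
      intro t
      calc ENNReal.ofReal (N t (f t)) ^ r
          ≤ ENNReal.ofReal (B * Real.exp (γ * |t - τ|)) ^ r :=
            ENNReal.rpow_le_rpow (ENNReal.ofReal_le_ofReal (hle t)) hrpos.le
        _ = ENNReal.ofReal ((B * Real.exp (γ * |t - τ|)) ^ r) :=
            ENNReal.ofReal_rpow_of_nonneg (by positivity) hrpos.le
        _ = ENNReal.ofReal (B ^ r * Real.exp ((γ * r) * |t - τ|)) := by
            rw [Real.mul_rpow hB (Real.exp_pos _).le, ← Real.exp_mul]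
            ring_nf
    have hint : Integrable (fun t : ℝ => B ^ r * Real.exp ((γ * r) * |t - τ|)) :=
      (myAux_integrable_exp_abs_sub hγr τ).const_mul _
    have hfin : (∫⁻ t, ENNReal.ofReal (N t (f t)) ^ r) < ∞ := by
      refine lt_of_le_of_lt (lintegral_mono key) ?_
      refine lt_of_le_of_lt (lintegral_mono fun t => Real.ofReal_le_enorm _) ?_
      exact hint.hasFiniteIntegral
    exact ENNReal.rpow_lt_top_of_nonneg (by positivity) hfin.ne

end Aux

/-- **Comment 3.8.** Under an exponential dichotomy, the stable and
unstable subspaces of the dichotomy coincide with `F^s_τ` and `F^u_τ`: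
`range (P τ) = F^s_τ` and `Ker (P τ) = F^u_τ`; consequently the family of dichotomic
projections is unique. -/
theorem dichotomic_projections_unique
    {X : Type*} [NormedAddCommGroup X] [NormedSpace ℝ X] [CompleteSpace X]
    (T : ℝ → ℝ → X →L[ℝ] X) (N : ℝ → X → ℝ) (C ε K c : ℝ)
    (hN₁ : ∀ t u, ‖u‖ ≤ N t u)
    (hN₂ : ∀ t (u : X), N t u ≤ C * Real.exp (ε * |t|) * ‖u‖)
    (hNadd : ∀ t (u v : X), N t (u + v) ≤ N t u + N t v)
    (hNsmul : ∀ t (r : ℝ) (u : X), N t (r • u) = |r| * N t u)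
    (hNmeas : ∀ u : X, Measurable fun t => N t u)
    (hId : ∀ t, T t t = ContinuousLinearMap.id ℝ X)
    (hCoc : ∀ τ s t, τ ≤ s → s ≤ t → ∀ u, T t s (T s τ u) = T t τ u)
    (hCont : ∀ τ (u : X), ContinuousOn (fun t => T t τ u) (Ici τ))
    (hContB : ∀ τ (u : X), ContinuousOn (fun s => T τ s u) (Iic τ))
    (hBd : ∀ τ t (u : X), τ ≤ t → N t (T t τ u) ≤ K * Real.exp (c * (t - τ)) * N τ u)
    (p : ℝ≥0∞) (hp : 1 ≤ p)
    (P : ℝ → X →L[ℝ] X) (S : ℝ → ℝ → X →L[ℝ] X) (a b D : ℝ)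
    (hdich : IsDichotomy T N P S a b D) :
    (∀ τ : ℝ, Set.range (P τ) = Fs T N p τ ∧ {u : X | P τ u = 0} = Fu T N p τ) ∧
    (∀ (P' : ℝ → X →L[ℝ] X) (S' : ℝ → ℝ → X →L[ℝ] X) (a' b' D' : ℝ),
      IsDichotomy T N P' S' a' b' D' → ∀ τ, P' τ = P τ) := by
  -- basic facts about the norms
  have hNnn : ∀ t (u : X), 0 ≤ N t u := fun t u => (norm_nonneg u).trans (hN₁ t u)
  have hN0 : ∀ t, N t (0 : X) = 0 := fun t =>
    le_antisymm (by simpa using hN₂ t 0) (by simpa using hN₁ t 0)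
  -- the key step: for any dichotomy, range = Fs and ker = Fu
  have main : ∀ (P₀ : ℝ → X →L[ℝ] X) (S₀ : ℝ → ℝ → X →L[ℝ] X) (a₀ b₀ D₀ : ℝ),
      IsDichotomy T N P₀ S₀ a₀ b₀ D₀ → ∀ τ : ℝ,
      Set.range (P₀ τ) = Fs T N p τ ∧ {u : X | P₀ τ u = 0} = Fu T N p τ := by
    rintro P₀ S₀ a₀ b₀ D₀ ⟨ha, hb, hD, hPP, hPT, hTS, hST, hPS, hests, hestu⟩ τ
    have hPid : ∀ (u : X), P₀ τ (P₀ τ u) = P₀ τ u := fun u =>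
      ContinuousLinearMap.ext_iff.1 (hPP τ) u
    constructor
    · -- range P₀ τ = Fs
      ext x
      constructor
      · rintro ⟨u, rfl⟩
        have hbd : ∀ t, τ ≤ t →
            N t (T t τ (P₀ τ u)) ≤ (D₀ * N τ u) * Real.exp (a₀ * |t - τ|) := by
          intro t ht
          have := hests τ t u ht
          have habs : |t - τ| = t - τ := abs_of_nonneg (by linarith)
          rw [habs]; linarith
        constructor
        · refine ⟨D₀ * N τ u, fun t ht => (hbd t ht).trans ?_⟩
          have h1 : Real.exp (a₀ * |t - τ|) ≤ 1 :=
            Real.exp_le_one_iff.2 (mul_nonpos_of_nonpos_of_nonneg ha.le (abs_nonneg _))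
          exact mul_le_of_le_one_right (mul_nonneg hD.le (hNnn τ u)) h1
        · refine myAux_famLpNorm_lt_top N p hp _ τ (D₀ * N τ u) a₀ ha
            (mul_nonneg hD.le (hNnn τ u)) (fun t => ?_) (fun t => ?_)
          · by_cases h : τ ≤ t <;> simp [h, hNnn, hN0]
          · by_cases h : τ ≤ t
            · simpa [h] using hbd t h
            · simp only [h, if_false, hN0]
              exact mul_nonneg (mul_nonneg hD.le (hNnn τ u)) (Real.exp_pos _).le
      · rintro ⟨⟨M, hM⟩, -⟩
        -- show x - P₀ τ x = 0
        set v := x - P₀ τ x with hv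
        have hM0 : 0 ≤ M := (hNnn τ _).trans (by simpa [hId τ] using hM τ le_rfl)
        have hkey : ∀ n : ℕ, N τ v ≤ (D₀ * M) * Real.exp (-b₀) ^ n := by
          intro n
          have ht : τ ≤ τ + n := le_add_of_nonneg_right (Nat.cast_nonneg n)
          have h1 := hestu τ (τ + n) (T (τ + n) τ x) ht
          rw [hST τ (τ + n) ht x] at h1
          have h2 : N (τ + n) (T (τ + n) τ x) ≤ M := hM _ ht
          have h3 : (0:ℝ) < Real.exp (-b₀ * (τ + n - τ)) := Real.exp_pos _
          have h4 : N τ v ≤ D₀ * Real.exp (-b₀ * (τ + n - τ)) * M := by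
            calc N τ v ≤ D₀ * Real.exp (-b₀ * (τ + n - τ)) * N (τ + n) (T (τ + n) τ x) := h1
              _ ≤ D₀ * Real.exp (-b₀ * (τ + n - τ)) * M :=
                  mul_le_mul_of_nonneg_left h2 (mul_nonneg hD.le h3.le)
          have h5 : -b₀ * (τ + n - τ) = (n : ℝ) * (-b₀) := by ring
          rw [h5, Real.exp_nat_mul] at h4
          exact h4.trans_eq (by ring)
        have htend : Tendsto (fun n : ℕ => (D₀ * M) * Real.exp (-b₀) ^ n)
            atTop (nhds 0) := by
          have := tendsto_pow_atTop_nhds_zero_of_lt_one (Real.exp_pos (-b₀)).le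
            (Real.exp_lt_one_iff.2 (by linarith))
          simpa using this.const_mul (D₀ * M)
        have hle0 : N τ v ≤ 0 := ge_of_tendsto' htend hkey
        have hv0 : v = 0 := by
          have := (hN₁ τ v).trans hle0
          simpa using norm_le_zero_iff.1 this
        have hx' : x - P₀ τ x = 0 := by rw [← hv]; exact hv0
        exact ⟨x, (sub_eq_zero.1 hx').symm⟩
    · -- ker P₀ τ = Fu
      ext x
      constructor
      · intro hx
        have hx' : P₀ τ x = 0 := hx
        have hxx : x - P₀ τ x = x := by rw [hx', sub_zero]
        refine ⟨fun t => S₀ t τ x, ?_, ?_, ?_, ?_⟩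
        · have h1 := hST τ τ le_rfl x
          simp only [hId τ, ContinuousLinearMap.id_apply] at h1
          rw [hxx] at h1
          exact h1
        · intro s t hst htτ
          have hsτ : s ≤ τ := hst.trans htτ
          set w := S₀ s τ x with hwdef
          have hw1 : T τ s w = x := by
            have h := hTS s τ hsτ x
            rw [hxx] at h
            exact h
          have hw2 : P₀ s w = 0 := by
            have h := hPS s τ hsτ x
            rw [hxx] at h
            exact h
          have h3 := hST t τ htτ (T t s w)
          rw [hCoc s t τ hst htτ w, hw1] at h3
          have h4 : P₀ t (T t s w) = 0 := by
            have h5 := ContinuousLinearMap.ext_iff.1 (hPT s t hst) w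
            simp only [ContinuousLinearMap.comp_apply] at h5
            rw [h5, hw2, map_zero]
          rw [hxx, h4, sub_zero] at h3
          show S₀ t τ x = T t s (S₀ s τ x)
          rw [← hwdef]
          exact h3
        · refine ⟨D₀ * N τ x, fun t htτ => ?_⟩
          have h1 := hestu t τ x htτ
          rw [hxx] at h1
          have h2 : Real.exp (-b₀ * (τ - t)) ≤ 1 :=
            Real.exp_le_one_iff.2 (by nlinarith)
          calc N t (S₀ t τ x) ≤ D₀ * Real.exp (-b₀ * (τ - t)) * N τ x := h1
            _ ≤ D₀ * 1 * N τ x := by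
                apply mul_le_mul_of_nonneg_right _ (hNnn τ x)
                exact mul_le_mul_of_nonneg_left h2 hD.le
            _ = D₀ * N τ x := by ring
        · refine myAux_famLpNorm_lt_top N p hp _ τ (D₀ * N τ x) (-b₀) (by linarith)
            (mul_nonneg hD.le (hNnn τ x)) (fun t => ?_) (fun t => ?_)
          · by_cases h : t ≤ τ <;> simp [h, hNnn, hN0]
          · by_cases h : t ≤ τ
            · have h1 := hestu t τ x h
              rw [hxx] at h1
              have habs : |t - τ| = τ - t := by
                rw [abs_of_nonpos (by linarith)]; ring
              simp only [h, if_true]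
              rw [habs, mul_right_comm]
              exact h1
            · simp only [h, if_false, hN0]
              exact mul_nonneg (mul_nonneg hD.le (hNnn τ x)) (Real.exp_pos _).le
      · rintro ⟨φ, hφτ, hφcoc, ⟨M, hM⟩, -⟩
        show P₀ τ x = 0
        have hM0 : 0 ≤ M := le_trans (hφτ ▸ hNnn τ (φ τ)) (hM τ le_rfl)
        have hkey : ∀ n : ℕ, N τ (P₀ τ x) ≤ (D₀ * M) * Real.exp a₀ ^ n := by
          intro n
          have htτ : τ - n ≤ τ := by
            have : (0:ℝ) ≤ n := Nat.cast_nonneg n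
            linarith
          have h2 : x = T τ (τ - n) (φ (τ - n)) := by
            rw [← hφτ]; exact hφcoc (τ - n) τ htτ le_rfl
          have h3 : P₀ τ x = T τ (τ - n) (P₀ (τ - n) (φ (τ - n))) := by
            rw [h2]
            have h5 := ContinuousLinearMap.ext_iff.1 (hPT (τ - n) τ htτ) (φ (τ - n))
            simpa using h5
          have h4 := hests (τ - n) τ (φ (τ - n)) htτ
          have h6 : N τ (P₀ τ x) ≤ D₀ * Real.exp (a₀ * (τ - (τ - n))) * N (τ - n) (φ (τ - n)) := by
            rw [h3]
            exact h4
          have h7 : N τ (P₀ τ x) ≤ D₀ * Real.exp (a₀ * (τ - (τ - n))) * M := by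
            refine h6.trans ?_
            exact mul_le_mul_of_nonneg_left (hM _ htτ)
              (mul_nonneg hD.le (Real.exp_pos _).le)
          have h8 : a₀ * (τ - (τ - n)) = (n : ℝ) * a₀ := by ring
          rw [h8, Real.exp_nat_mul] at h7
          exact h7.trans_eq (by ring)
        have htend : Tendsto (fun n : ℕ => (D₀ * M) * Real.exp a₀ ^ n)
            atTop (nhds 0) := by
          have := tendsto_pow_atTop_nhds_zero_of_lt_one (Real.exp_pos a₀).le
            (Real.exp_lt_one_iff.2 ha)
          simpa using this.const_mul (D₀ * M)
        have hle0 : N τ (P₀ τ x) ≤ 0 := ge_of_tendsto' htend hkey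
        have := (hN₁ τ _).trans hle0
        simpa using norm_le_zero_iff.1 this
  refine ⟨fun τ => main P S a b D hdich τ, ?_⟩
  intro P' S' a' b' D' hd' τ
  obtain ⟨hs, hu⟩ := main P S a b D hdich τ
  obtain ⟨hs', hu'⟩ := main P' S' a' b' D' hd' τ
  have hPid : ∀ (u : X), P τ (P τ u) = P τ u := fun u =>
    ContinuousLinearMap.ext_iff.1 (hdich.2.2.2.1 τ) u
  have hPid' : ∀ (u : X), P' τ (P' τ u) = P' τ u := fun u =>
    ContinuousLinearMap.ext_iff.1 (hd'.2.2.2.1 τ) u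
  ext u
  have h1 : P τ u ∈ Set.range (P' τ) := by
    rw [hs', ← hs]; exact ⟨u, rfl⟩
  obtain ⟨w, hw⟩ := h1
  have h2 : P' τ (P τ u) = P τ u := by rw [← hw, hPid', hw]
  have h3 : P' τ (u - P τ u) = 0 := by
    have hmem : u - P τ u ∈ {v : X | P' τ v = 0} := by
      rw [hu', ← hu]
      show P τ (u - P τ u) = 0
      rw [map_sub, hPid, sub_self]
    exact hmem
  have h4 : P' τ u = P' τ (P τ u) + P' τ (u - P τ u) := by
    rw [← map_add]; congr 1; abel
  rw [h4, h2, h3, add_zero]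
end

section
/- Let B : ℝ → B(X) be strongly continuous with ‖B(t)‖ ≤ Me^{−ε|t|}φ(t) for φ ∈ L^q(ℝ), and define P : (L^p∩C_b) → L^q by (Px)(t) = B(t)x(t). Then P is a bounded linear operator with ‖P‖ ≤ MC‖φ‖_{L^q}. -/
open MeasureTheory Set Filter
open scoped ENNReal

lemma fam_le {X : Type*} [NormedAddCommGroup X] (N : ℝ → X → ℝ) (q : ℝ≥0∞)
    (hq : q ≠ 0) (g : ℝ → X) (h : ℝ → ℝ) (hgh : ∀ t, N t (g t) ≤ h t) :
    famLpNorm N q g ≤ eLpNorm h q volume := by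
  have key : ∀ t, ENNReal.ofReal (N t (g t)) ≤ (‖h t‖₊ : ℝ≥0∞) := fun t =>
    le_trans (ENNReal.ofReal_le_ofReal (hgh t)) (Real.ofReal_le_enorm _)
  rcases eq_or_ne q ∞ with hqt | hqt
  · simp only [famLpNorm, hqt, if_true, eLpNorm_exponent_top, eLpNormEssSup]
    exact essSup_mono_ae (Filter.Eventually.of_forall key)
  · simp only [famLpNorm, hqt, if_false, eLpNorm, hq, eLpNorm', if_false]
    refine ENNReal.rpow_le_rpow (lintegral_mono fun t => ?_) (by positivity)
    exact ENNReal.rpow_le_rpow (key t) ENNReal.toReal_nonneg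


/-- If `B : ℝ → B(X)` is strongly continuous with
`‖B t‖ ≤ M e^{-ε|t|} φ t` for some `φ ∈ L^q(ℝ)`, then the multiplication operator
`(Px) t = B t (x t)` maps `L^p ∩ C_b` into `L^q` with `‖Px‖_q ≤ M C ‖φ‖_q ‖x‖_∞`
(hence `‖P‖ ≤ M C ‖φ‖_{L^q}`, since the `Y₁`-norm dominates the sup-norm). -/
theorem perturbation_operator_bound
    {X : Type*} [NormedAddCommGroup X] [NormedSpace ℝ X] [CompleteSpace X]
    (N : ℝ → X → ℝ) (C ε M : ℝ)
    (hN₁ : ∀ t u, ‖u‖ ≤ N t u)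
    (hN₂ : ∀ t (u : X), N t u ≤ C * Real.exp (ε * |t|) * ‖u‖)
    (q : ℝ≥0∞) (hq : 1 ≤ q)
    (B : ℝ → X →L[ℝ] X) (hBcont : ∀ u : X, Continuous fun t => B t u)
    (φ : ℝ → ℝ) (hφ : MemLp φ q volume) (hφnn : ∀ t, 0 ≤ φ t)
    (hB : ∀ t, ‖B t‖ ≤ M * Real.exp (-ε * |t|) * φ t) :
    ∀ (x : ℝ → X) (Msup : ℝ), Continuous x → (∀ t, N t (x t) ≤ Msup) →
      famLpNorm N q (fun t => B t (x t)) ≤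
        ENNReal.ofReal (M * C) * eLpNorm φ q volume * ENNReal.ofReal Msup := by
  intro x Msup hxc hxsup
  have hq0 : q ≠ 0 := by intro h; rw [h] at hq; exact absurd hq (by simp)
  have hMsup : 0 ≤ Msup := le_trans (norm_nonneg _) (le_trans (hN₁ 0 (x 0)) (hxsup 0))
  by_cases hC : 0 ≤ C
  · by_cases hM : 0 ≤ M
    · -- main case
      have hpt : ∀ t, N t (B t (x t)) ≤ (M * C * Msup) * φ t := by
        intro t
        have e1 : Real.exp (ε * |t|) * Real.exp (-ε * |t|) = 1 := by
          rw [← Real.exp_add]; ring_nf; exact Real.exp_zero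
        have hce : 0 ≤ C * Real.exp (ε * |t|) := by positivity
        calc N t (B t (x t)) ≤ C * Real.exp (ε * |t|) * ‖B t (x t)‖ := hN₂ t _
          _ ≤ C * Real.exp (ε * |t|) * (‖B t‖ * ‖x t‖) := by
              exact mul_le_mul_of_nonneg_left ((B t).le_opNorm _) hce
          _ ≤ C * Real.exp (ε * |t|) * (M * Real.exp (-ε * |t|) * φ t * ‖x t‖) := by
              exact mul_le_mul_of_nonneg_left
                (mul_le_mul_of_nonneg_right (hB t) (norm_nonneg _)) hce
          _ = (C * M * φ t) * ‖x t‖ := by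
              rw [show C * Real.exp (ε * |t|) * (M * Real.exp (-ε * |t|) * φ t * ‖x t‖)
                = (C * M * φ t) * ‖x t‖ * (Real.exp (ε * |t|) * Real.exp (-ε * |t|)) by ring,
                e1, mul_one]
          _ ≤ (C * M * φ t) * Msup := by
              refine mul_le_mul_of_nonneg_left ?_ (mul_nonneg (mul_nonneg hC hM) (hφnn t))
              exact le_trans (hN₁ t (x t)) (hxsup t)
          _ = (M * C * Msup) * φ t := by ring
      have h1 : famLpNorm N q (fun t => B t (x t)) ≤
          eLpNorm (fun t => (M * C * Msup) * φ t) q volume :=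
        fam_le N q hq0 _ _ hpt
      have h2 : eLpNorm (fun t => (M * C * Msup) * φ t) q volume
          = ENNReal.ofReal (M * C * Msup) * eLpNorm φ q volume := by
        rw [show (fun t => (M * C * Msup) * φ t) = (M * C * Msup) • φ by
          ext t; simp [smul_eq_mul]]
        rw [eLpNorm_const_smul, Real.enorm_eq_ofReal (by positivity)]
      calc famLpNorm N q (fun t => B t (x t))
          ≤ ENNReal.ofReal (M * C * Msup) * eLpNorm φ q volume := h1.trans h2.le
        _ = ENNReal.ofReal (M * C) * eLpNorm φ q volume * ENNReal.ofReal Msup := by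
            rw [ENNReal.ofReal_mul (by positivity)]; ring
    · -- M < 0 : B ≡ 0
      push_neg at hM
      have hzero : ∀ t, N t (B t (x t)) ≤ 0 := by
        intro t
        have hb0 : ‖B t‖ = 0 := le_antisymm
          (le_trans (hB t) (mul_nonpos_of_nonpos_of_nonneg
            (mul_nonpos_of_nonpos_of_nonneg hM.le (Real.exp_pos _).le) (hφnn t)))
          (norm_nonneg _)
        have : B t (x t) = 0 := by
          have := (B t).le_opNorm (x t)
          rw [hb0, zero_mul] at this
          exact norm_le_zero_iff.mp this
        rw [this]
        calc N t (0 : X) ≤ C * Real.exp (ε * |t|) * ‖(0 : X)‖ := hN₂ t 0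
          _ = 0 := by simp
      calc famLpNorm N q (fun t => B t (x t))
          ≤ eLpNorm (fun _ : ℝ => (0 : ℝ)) q volume := fam_le N q hq0 _ _ hzero
        _ = 0 := by simp
        _ ≤ _ := zero_le
  · -- C < 0 : N ≡ 0
    push_neg at hC
    have hzero : ∀ t, N t (B t (x t)) ≤ 0 := by
      intro t
      exact le_trans (hN₂ t _) (mul_nonpos_of_nonpos_of_nonneg
        (mul_nonpos_of_nonpos_of_nonneg hC.le (Real.exp_pos _).le) (norm_nonneg _))
    calc famLpNorm N q (fun t => B t (x t))
        ≤ eLpNorm (fun _ : ℝ => (0 : ℝ)) q volume := fam_le N q hq0 _ _ hzero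
      _ = 0 := by simp
      _ ≤ _ := zero_le
end
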